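/- Let (ℓ_p)_{p≥1} and (γ_p)_{p≥1} be sequences of positive real numbers such that lim_{p→∞} ℓ_p / e^{γ_p ℓ_p} = 0 and γ_p ℓ_p + 1 ≤ γ_{p+1} ℓ_{p+1} for all p ∈ ℕ. Then for any constant c ≥ 0, lim_{p→∞} (cp + Σ_{j=1}^{p} ℓ_j) / e^{γ_p ℓ_p} = 0. -/

import Mathlib

open Filter

namespace Paper

/-- **Lemma (part (f) of the computational lemma).** If `(ℓ_p)`, `(γ_p)` are sequences of
positive reals with `ℓ_p / e^{γ_p ℓ_p} → 0` and `γ_p ℓ_p + 1 ≤ γ_{p+1} ℓ_{p+1}` for all `p`,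
then for any `c ≥ 0`, `(c p + ∑_{j=1}^p ℓ_j)/e^{γ_p ℓ_p} → 0`. -/
theorem sum_over_exp_tendsto_zero (ℓ γ : ℕ → ℝ)
    (hl : ∀ p, 1 ≤ p → 0 < ℓ p) (hg : ∀ p, 1 ≤ p → 0 < γ p)
    (hc : Tendsto (fun p : ℕ => ℓ p / Real.exp (γ p * ℓ p)) atTop (nhds 0))
    (he : ∀ p, 1 ≤ p → γ p * ℓ p + 1 ≤ γ (p + 1) * ℓ (p + 1))
    (c : ℝ) (hcc : 0 ≤ c) :
    Tendsto (fun p : ℕ => (c * p + ∑ j ∈ Finset.Icc 1 p, ℓ j) / Real.exp (γ p * ℓ p))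
      atTop (nhds 0) := by
  set a : ℕ → ℝ := fun p => γ p * ℓ p with ha
  have step : ∀ p, 1 ≤ p → ∀ k : ℕ, a p + k ≤ a (p + k) := by
    intro p hp k
    induction k with
    | zero => simp
    | succ k ih =>
      have h1 : a (p + k) + 1 ≤ a (p + k + 1) := he (p + k) (le_trans hp (Nat.le_add_right _ _))
      have h2 : a (p + (k+1)) = a (p + k + 1) := rfl
      push_cast
      rw [h2]
      linarith
  have key : ∀ j p, 1 ≤ j → j ≤ p → a j + (p - j : ℕ) ≤ a p := by
    intro j p hj hjp
    have := step j hj (p - j)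
    rwa [Nat.add_sub_cancel' hjp] at this
  set r : ℝ := Real.exp (-1) with hrdef
  have hr0 : 0 < r := Real.exp_pos _
  have hr1 : r < 1 := by
    rw [hrdef, show (1:ℝ) = Real.exp 0 by simp]
    exact Real.exp_lt_exp.mpr (by norm_num)
  set K : ℝ := (1 - r)⁻¹ with hKdef
  have hK0 : 0 < K := inv_pos.mpr (by linarith)
  -- geometric sum bound
  have geom : ∀ p, ∑ j ∈ Finset.Icc 1 p, Real.exp (a j) ≤ Real.exp (a p) * K := by
    intro p
    calc ∑ j ∈ Finset.Icc 1 p, Real.exp (a j)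
        ≤ ∑ j ∈ Finset.Icc 1 p, Real.exp (a p) * r ^ (p - j) := by
          apply Finset.sum_le_sum
          intro j hj
          rw [Finset.mem_Icc] at hj
          have hkey := key j p hj.1 hj.2
          have : r ^ (p - j) = Real.exp (-((p - j : ℕ) : ℝ)) := by
            rw [hrdef, ← Real.exp_nat_mul]
            ring_nf
          rw [this, ← Real.exp_add]
          exact Real.exp_le_exp.mpr (by linarith)
      _ = Real.exp (a p) * ∑ j ∈ Finset.Icc 1 p, r ^ (p - j) := by
          rw [Finset.mul_sum]
      _ ≤ Real.exp (a p) * K := by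
          apply mul_le_mul_of_nonneg_left _ (Real.exp_pos _).le
          calc ∑ j ∈ Finset.Icc 1 p, r ^ (p - j)
              ≤ ∑ j ∈ Finset.range (p + 1), r ^ (p - j) := by
                apply Finset.sum_le_sum_of_subset_of_nonneg
                · intro j hj
                  rw [Finset.mem_Icc] at hj
                  rw [Finset.mem_range]
                  omega
                · intro j _ _
                  positivity
            _ = ∑ j ∈ Finset.range (p + 1), r ^ j := by
                have := Finset.sum_range_reflect (fun j => r ^ j) (p + 1)
                simpa using this
            _ ≤ ∑' j : ℕ, r ^ j := by
                apply Summable.sum_le_tsum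
                · intro j _; positivity
                · exact summable_geometric_of_lt_one hr0.le hr1
            _ = K := tsum_geometric_of_lt_one hr0.le hr1
  -- aux limit : (c*p + S)/exp (a p) → 0 for any constant S
  have aux : ∀ S : ℝ, Tendsto (fun p : ℕ => (c * p + S) / Real.exp (a p)) atTop (nhds 0) := by
    intro S
    have hpoly : Tendsto (fun x : ℝ => (c * x + S) / Real.exp x) atTop (nhds 0) := by
      have := Polynomial.tendsto_div_exp_atTop (Polynomial.C c * Polynomial.X + Polynomial.C S)
      simpa using this
    have hg2 : Tendsto (fun x : ℝ => (c * x + S) / Real.exp (a 1 - 1 + x)) atTop (nhds 0) := by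
      have : (fun x : ℝ => (c * x + S) / Real.exp (a 1 - 1 + x))
          = fun x : ℝ => ((c * x + S) / Real.exp x) * Real.exp (-(a 1 - 1)) := by
        funext x
        rw [Real.exp_add, Real.exp_neg, mul_comm, ← div_div, div_eq_mul_inv]
        ring
      rw [this, show (0:ℝ) = 0 * Real.exp (-(a 1 - 1)) by ring]
      exact hpoly.mul_const _
    have hgn : Tendsto (fun p : ℕ => (c * p + S) / Real.exp (a 1 - 1 + p)) atTop (nhds 0) :=
      hg2.comp tendsto_natCast_atTop_atTop
    -- squeeze |f| by the bound
    rw [NormedAddCommGroup.tendsto_nhds_zero] at hgn ⊢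
    intro ε hε
    filter_upwards [hgn ε hε, eventually_ge_atTop 1] with p hp hp1
    have hap : a 1 - 1 + p ≤ a p := by
      have := key 1 p le_rfl hp1
      have hcast : ((p - 1 : ℕ) : ℝ) = (p : ℝ) - 1 := by
        have : (1:ℕ) ≤ p := hp1
        push_cast [this]
        ring
      rw [hcast] at this
      linarith
    have h1 : Real.exp (a 1 - 1 + p) ≤ Real.exp (a p) := Real.exp_le_exp.mpr hap
    calc ‖(c * p + S) / Real.exp (a p)‖
        = ‖c * p + S‖ / Real.exp (a p) := by
          rw [norm_div, Real.norm_eq_abs (Real.exp _), abs_of_pos (Real.exp_pos _)]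
      _ ≤ ‖c * p + S‖ / Real.exp (a 1 - 1 + p) := by
          apply div_le_div_of_nonneg_left (norm_nonneg _) (Real.exp_pos _) h1
      _ = ‖(c * p + S) / Real.exp (a 1 - 1 + p)‖ := by
          rw [norm_div, Real.norm_eq_abs (Real.exp _), abs_of_pos (Real.exp_pos _)]
      _ < ε := hp
  -- main ε-argument
  rw [NormedAddCommGroup.tendsto_nhds_zero]
  intro ε hε
  set ε' : ℝ := ε / (2 * K) with hε'def
  have hε' : 0 < ε' := by positivity
  obtain ⟨N, hN⟩ := eventually_atTop.mp ((NormedAddCommGroup.tendsto_nhds_zero.mp hc) ε' hε')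
  set S : ℝ := ∑ j ∈ Finset.Icc 1 N, ℓ j with hSdef
  obtain ⟨N2, hN2⟩ := eventually_atTop.mp
    ((NormedAddCommGroup.tendsto_nhds_zero.mp (aux S)) (ε / 2) (by positivity))
  filter_upwards [eventually_ge_atTop (max (max N N2) 1)] with p hpge
  have hpN : N ≤ p := le_trans (le_trans (le_max_left _ _) (le_max_left _ _)) hpge
  have hpN2 : N2 ≤ p := le_trans (le_trans (le_max_right _ _) (le_max_left _ _)) hpge
  have hp1 : 1 ≤ p := le_trans (le_max_right _ _) hpge
  have hsum_pos : ∀ j ∈ Finset.Icc 1 p, 0 ≤ ℓ j := by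
    intro j hj
    rw [Finset.mem_Icc] at hj
    exact (hl j hj.1).le
  have hnum_nonneg : 0 ≤ c * p + ∑ j ∈ Finset.Icc 1 p, ℓ j := by
    have := Finset.sum_nonneg hsum_pos
    positivity
  -- split the sum
  have hsplit : ∑ j ∈ Finset.Icc 1 p, ℓ j = S + ∑ j ∈ Finset.Ioc N p, ℓ j := by
    rw [hSdef, show Finset.Icc 1 p = Finset.Ioc 0 p from Finset.Icc_add_one_left_eq_Ioc 0 p,
        show Finset.Icc 1 N = Finset.Ioc 0 N from Finset.Icc_add_one_left_eq_Ioc 0 N]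
    exact (Finset.sum_Ioc_consecutive _ (Nat.zero_le N) hpN).symm
  have htail : ∑ j ∈ Finset.Ioc N p, ℓ j ≤ ε' * (Real.exp (a p) * K) := by
    calc ∑ j ∈ Finset.Ioc N p, ℓ j
        ≤ ∑ j ∈ Finset.Ioc N p, ε' * Real.exp (a j) := by
          apply Finset.sum_le_sum
          intro j hj
          rw [Finset.mem_Ioc] at hj
          have hnorm := hN j (le_of_lt hj.1)
          have : ℓ j / Real.exp (a j) ≤ ε' :=
            le_of_lt (lt_of_le_of_lt (le_abs_self _) hnorm)
          rwa [div_le_iff₀ (Real.exp_pos _)] at this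
      _ = ε' * ∑ j ∈ Finset.Ioc N p, Real.exp (a j) := by rw [Finset.mul_sum]
      _ ≤ ε' * ∑ j ∈ Finset.Icc 1 p, Real.exp (a j) := by
          apply mul_le_mul_of_nonneg_left _ hε'.le
          apply Finset.sum_le_sum_of_subset_of_nonneg
          · intro j hj
            rw [Finset.mem_Ioc] at hj
            rw [Finset.mem_Icc]
            omega
          · intro j _ _
            positivity
      _ ≤ ε' * (Real.exp (a p) * K) := mul_le_mul_of_nonneg_left (geom p) hε'.le
  have hεK : ε' * K = ε / 2 := by
    rw [hε'def]
    field_simp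
  have hEp : 0 < Real.exp (a p) := Real.exp_pos _
  calc ‖(c * p + ∑ j ∈ Finset.Icc 1 p, ℓ j) / Real.exp (a p)‖
      = (c * p + ∑ j ∈ Finset.Icc 1 p, ℓ j) / Real.exp (a p) := by
        rw [Real.norm_eq_abs, abs_of_nonneg (div_nonneg hnum_nonneg hEp.le)]
    _ = (c * p + S) / Real.exp (a p) + (∑ j ∈ Finset.Ioc N p, ℓ j) / Real.exp (a p) := by
        rw [hsplit]; ring
    _ ≤ (c * p + S) / Real.exp (a p) + ε / 2 := by
        have : (∑ j ∈ Finset.Ioc N p, ℓ j) / Real.exp (a p) ≤ ε' * K := by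
          rw [div_le_iff₀ hEp]
          calc ∑ j ∈ Finset.Ioc N p, ℓ j ≤ ε' * (Real.exp (a p) * K) := htail
            _ = ε' * K * Real.exp (a p) := by ring
        linarith [this, hεK]
    _ < ε / 2 + ε / 2 := by
        have := hN2 p hpN2
        have h2 : (c * p + S) / Real.exp (a p) ≤ ‖(c * p + S) / Real.exp (a p)‖ :=
          le_abs_self _
        linarith [lt_of_le_of_lt h2 this]
    _ = ε := by ring

end Paper
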